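/- Let μ_p be a probability measure on [0,1] that is mirror-conservative: μ_p[a₁,a₂] ≤ μ_p[1-a₂,1-a₁] for all 0 ≤ a₁ ≤ a₂ ≤ 1/2. Then there exist a measure μ_s on [0,1] symmetric about 1/2 (μ_s(a,b] = μ_s[1-b,1-a) for all 0 ≤ a ≤ b ≤ 1) and a nonnegative measure μ_r supported on (1/2, 1] such that μ_p = μ_s + μ_r. -/

import Mathlib

open MeasureTheory Set Filter Topology

lemma mirror_tendsto_Iic (μ : Measure ℝ) [IsFiniteMeasure μ] (x : ℝ) :
    Tendsto (fun y => (μ (Iic y)).toReal) (𝓝[>] x) (𝓝 ((μ (Iic x)).toReal)) := by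
  have h := tendsto_measure_biInter_gt (μ := μ) (s := fun r : ℝ => Iic r) (a := x)
    (fun r _ => measurableSet_Iic.nullMeasurableSet)
    (fun i j _ hij => Iic_subset_Iic.2 hij) ⟨x + 1, by linarith, measure_ne_top μ _⟩
  have hint : (⋂ r > x, Iic r) = Iic x := by
    ext z
    simp only [mem_iInter, mem_Iic]
    constructor
    · intro hz
      by_contra hzx
      push_neg at hzx
      rcases exists_between hzx with ⟨w, hw1, hw2⟩
      exact absurd (hz w hw1) (not_le.2 hw2)
    · intro hz r hr
      linarith
  rw [hint] at h
  exact (ENNReal.tendsto_toReal (measure_ne_top μ _)).comp h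

theorem mirror_conservative_decomposition (μp : Measure ℝ) [IsProbabilityMeasure μp]
    (hsupp : μp (Icc (0 : ℝ) 1)ᶜ = 0)
    (hmirror : ∀ a₁ a₂ : ℝ, 0 ≤ a₁ → a₁ ≤ a₂ → a₂ ≤ 1 / 2 →
      μp (Icc a₁ a₂) ≤ μp (Icc (1 - a₂) (1 - a₁))) :
    ∃ μs μr : Measure ℝ,
      μp = μs + μr ∧
      (∀ a b : ℝ, 0 ≤ a → a ≤ b → b ≤ 1 → μs (Ioc a b) = μs (Ico (1 - b) (1 - a))) ∧
      μr (Ioc (1 / 2 : ℝ) 1)ᶜ = 0 := by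
  classical
  set f : ℝ → ℝ := fun z => 1 - z with hfdef
  have hfm : Measurable f := measurable_const.sub measurable_id
  set μs : Measure ℝ := μp.restrict (Icc 0 (1/2)) +
    Measure.map f (μp.restrict (Ico 0 (1/2))) with hμsdef
  have hμs : ∀ S : Set ℝ, MeasurableSet S →
      μs S = μp (S ∩ Icc 0 (1/2)) + μp (f ⁻¹' S ∩ Ico 0 (1/2)) := by
    intro S hS
    rw [hμsdef, Measure.add_apply, Measure.restrict_apply hS,
      Measure.map_apply hfm hS, Measure.restrict_apply (hfm hS)]
  have hμs_fin : IsFiniteMeasure μs := by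
    constructor
    rw [hμs univ MeasurableSet.univ]
    simp only [univ_inter, preimage_univ]
    exact ENNReal.add_lt_top.2 ⟨measure_lt_top μp _, measure_lt_top μp _⟩
  haveI := hμs_fin
  have hpreIoc : ∀ a b : ℝ, f ⁻¹' Ioc a b = Ico (1-b) (1-a) := by
    intro a b
    ext z
    simp only [hfdef, mem_preimage, mem_Ioc, mem_Ico]
    constructor <;> rintro ⟨h1, h2⟩ <;> exact ⟨by linarith, by linarith⟩
  have hpreIco : ∀ c d : ℝ, f ⁻¹' Ico c d = Ioc (1-d) (1-c) := by
    intro c d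
    ext z
    simp only [hfdef, mem_preimage, mem_Ico, mem_Ioc]
    constructor <;> rintro ⟨h1, h2⟩ <;> exact ⟨by linarith, by linarith⟩
  have hpreIic : ∀ t : ℝ, f ⁻¹' Iic t = Ici (1-t) := by
    intro t
    ext z
    simp only [hfdef, mem_preimage, mem_Iic, mem_Ici]
    constructor <;> intro h <;> linarith
  -- Key interval inequality
  have hK : ∀ x y : ℝ, μs (Ioc x y) ≤ μp (Ioc x y) := by
    intro x y
    rw [hμs _ measurableSet_Ioc, hpreIoc, Ico_inter_Ico]
    set c := (1-y) ⊔ 0 with hc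
    set d := (1-x) ⊓ (1/2) with hd
    have hc0 : (0:ℝ) ≤ c := le_max_right _ _
    have hd2 : d ≤ 1/2 := min_le_right _ _
    have hd1 : d ≤ 1 - x := min_le_left _ _
    have hc1 : 1 - y ≤ c := le_max_left _ _
    have claim : μp (Ico c d) ≤ μp (Ioc (1-d) (1-c)) := by
      rcases le_or_gt d c with hdc | hcd
      · rw [Ico_eq_empty (not_lt.2 hdc)]; simp
      · have hunion : Ico c d = ⋃ n : ℕ, Icc c (d - (d-c)/(n+1)) := by
          ext z
          simp only [mem_Ico, mem_iUnion, mem_Icc]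
          constructor
          · rintro ⟨hz1, hz2⟩
            obtain ⟨n, hn⟩ := exists_nat_gt ((d-c)/(d-z))
            refine ⟨n, hz1, ?_⟩
            have hdz : 0 < d - z := by linarith
            rw [div_lt_iff₀ hdz] at hn
            have hnn : (0:ℝ) ≤ (n:ℝ) := Nat.cast_nonneg n
            have hle : (d-c)/(n+1) ≤ d - z := by
              rw [div_le_iff₀ (by positivity)]
              nlinarith
            linarith
          · rintro ⟨n, hz1, hz2⟩
            have hpos : (0:ℝ) < (d-c)/(n+1) := div_pos (by linarith) (by positivity)
            exact ⟨hz1, by linarith⟩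
        rw [hunion]
        have hmono : Monotone (fun n : ℕ => Icc c (d - (d-c)/(n+1))) := by
          intro n m hnm
          apply Icc_subset_Icc_right
          have hle : (d-c)/((m:ℝ)+1) ≤ (d-c)/((n:ℝ)+1) := by
            gcongr <;> first
              | linarith
              | exact_mod_cast Nat.succ_le_succ hnm
          linarith
        rw [hmono.measure_iUnion]
        apply iSup_le
        intro n
        have hpos : (0:ℝ) < (d-c)/(n+1) := div_pos (by linarith) (by positivity)
        have hcd' : c ≤ d - (d-c)/(n+1) := by
          have h1 : (d-c)/((n:ℝ)+1) ≤ d - c := by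
            apply div_le_self (by linarith)
            have := Nat.cast_nonneg (α := ℝ) n
            linarith
          linarith
        refine le_trans (hmirror c (d - (d-c)/(n+1)) hc0 hcd' (by linarith)) (measure_mono ?_)
        intro z hz
        simp only [mem_Icc] at hz
        simp only [mem_Ioc]
        exact ⟨by linarith [hz.1], by linarith [hz.2]⟩
    have hsub : Ioc (1-d) (1-c) ⊆ Ioc x y ∩ Ioi (1/2) := by
      intro z hz
      simp only [mem_Ioc] at hz
      refine ⟨⟨by linarith [hz.1], by linarith [hz.2]⟩, ?_⟩
      simp only [mem_Ioi]
      linarith [hz.1]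
    calc μp (Ioc x y ∩ Icc 0 (1/2)) + μp (Ico c d)
        ≤ μp (Ioc x y ∩ Icc 0 (1/2)) + μp (Ioc x y ∩ Ioi (1/2)) :=
          add_le_add le_rfl (claim.trans (measure_mono hsub))
      _ = μp ((Ioc x y ∩ Icc 0 (1/2)) ∪ (Ioc x y ∩ Ioi (1/2))) := by
          rw [measure_union ?_ (measurableSet_Ioc.inter measurableSet_Ioi)]
          rw [Set.disjoint_left]
          rintro z ⟨-, -, h2⟩ ⟨-, h3⟩
          simp only [mem_Ioi] at h3
          linarith
      _ ≤ μp (Ioc x y) := measure_mono (by rintro z (h | h) <;> exact h.1)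
  -- The Stieltjes function
  set F : ℝ → ℝ := fun t => (μp (Iic t)).toReal - (μs (Iic t)).toReal with hFdef
  have hdiff : ∀ x y : ℝ, x ≤ y →
      F y - F x = (μp (Ioc x y)).toReal - (μs (Ioc x y)).toReal := by
    intro x y hxy
    have h1 : μp (Iic y) = μp (Iic x) + μp (Ioc x y) := by
      rw [← Iic_union_Ioc_eq_Iic hxy, measure_union (Iic_disjoint_Ioc le_rfl) measurableSet_Ioc]
    have h2 : μs (Iic y) = μs (Iic x) + μs (Ioc x y) := by
      rw [← Iic_union_Ioc_eq_Iic hxy, measure_union (Iic_disjoint_Ioc le_rfl) measurableSet_Ioc]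
    simp only [hFdef]
    rw [h1, h2, ENNReal.toReal_add (measure_ne_top _ _) (measure_ne_top _ _),
      ENNReal.toReal_add (measure_ne_top _ _) (measure_ne_top _ _)]
    ring
  have hFmono : Monotone F := by
    intro x y hxy
    have hd := hdiff x y hxy
    have hle : (μs (Ioc x y)).toReal ≤ (μp (Ioc x y)).toReal :=
      (ENNReal.toReal_le_toReal (measure_ne_top _ _) (measure_ne_top _ _)).2 (hK x y)
    linarith
  have hFrc : ∀ x, ContinuousWithinAt F (Ici x) x := by
    intro x
    rw [← continuousWithinAt_Ioi_iff_Ici]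
    exact (mirror_tendsto_Iic μp x).sub (mirror_tendsto_Iic μs x)
  set FS : StieltjesFunction ℝ := ⟨F, hFmono, hFrc⟩ with hFS
  set μr := FS.measure with hμrdef
  have hμrIoc : ∀ a b : ℝ, μr (Ioc a b) = ENNReal.ofReal (F b - F a) := by
    intro a b
    rw [hμrdef, FS.measure_Ioc]
  -- F vanishes on (-∞, 1/2]
  have hμsIic : ∀ t : ℝ, t ≤ 1/2 → μs (Iic t) = μp (Iic t) := by
    intro t ht
    rw [hμs _ measurableSet_Iic, hpreIic]
    have h2 : Ici (1-t) ∩ Ico 0 (1/2) = (∅ : Set ℝ) := by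
      rw [eq_empty_iff_forall_notMem]
      rintro z ⟨hz1, hz2⟩
      rw [mem_Ici] at hz1
      rw [mem_Ico] at hz2
      linarith [hz2.1, hz2.2]
    rw [h2, measure_empty, add_zero]
    have h3 : μp (Iic t) = μp (Iic t ∩ Icc 0 (1/2)) + μp (Iic t \ Icc 0 (1/2)) :=
      (measure_inter_add_diff _ measurableSet_Icc).symm
    have h4 : μp (Iic t \ Icc 0 (1/2)) = 0 := by
      apply measure_mono_null _ hsupp
      intro z hz
      simp only [mem_diff, mem_Iic, mem_Icc, not_and, not_le] at hz
      simp only [mem_compl_iff, mem_Icc, not_and, not_le]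
      intro h0
      exact absurd (hz.2 h0) (not_lt.2 (by linarith [hz.1]))
    rw [h3, h4, add_zero]
  have hF0 : ∀ t : ℝ, t ≤ 1/2 → F t = 0 := by
    intro t ht
    simp only [hFdef]
    rw [hμsIic t ht, sub_self]
  -- F is constant on [1, ∞)
  have hFconst : ∀ t : ℝ, 1 ≤ t → F t = F 1 := by
    intro t ht
    have h1 : μp (Ioc 1 t) = 0 := by
      apply measure_mono_null _ hsupp
      intro z hz
      simp only [mem_Ioc] at hz
      simp only [mem_compl_iff, mem_Icc, not_and, not_le]
      intro h0
      exact hz.1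
    have h2 : μs (Ioc 1 t) = 0 := by
      rw [hμs _ measurableSet_Ioc, hpreIoc]
      have e1 : Ioc 1 t ∩ Icc 0 (1/2) = (∅ : Set ℝ) := by
        rw [eq_empty_iff_forall_notMem]
        rintro z ⟨hz1, hz2⟩
        rw [mem_Ioc] at hz1
        rw [mem_Icc] at hz2
        linarith [hz1.1, hz1.2, hz2.1, hz2.2]
      have e2 : Ico (1-t) (1-1) ∩ Ico 0 (1/2) = (∅ : Set ℝ) := by
        rw [eq_empty_iff_forall_notMem]
        rintro z ⟨hz1, hz2⟩
        rw [mem_Ico] at hz1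
        rw [mem_Ico] at hz2
        linarith [hz1.1, hz1.2, hz2.1, hz2.2]
      rw [e1, e2, measure_empty, add_zero]
    have hd := hdiff 1 t ht
    rw [h1, h2] at hd
    simp only [ENNReal.toReal_zero, sub_self] at hd
    linarith
  -- μr vanishes outside (1/2, 1]
  have hr1 : μr (Iic (1/2)) = 0 := by
    have hsub : Iic (1/2 : ℝ) ⊆ ⋃ n : ℕ, Ioc ((1/2 : ℝ) - (n+1)) (1/2) := by
      intro z hz
      simp only [mem_Iic] at hz
      obtain ⟨n, hn⟩ := exists_nat_gt ((1/2 : ℝ) - z)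
      simp only [mem_iUnion, mem_Ioc]
      exact ⟨n, by push_cast; linarith, hz⟩
    apply measure_mono_null hsub
    apply measure_iUnion_null
    intro n
    rw [hμrIoc]
    rw [hF0 _ le_rfl, hF0 _ (by have := Nat.cast_nonneg (α := ℝ) n; linarith)]
    simp
  have hr2 : μr (Ioi (1:ℝ)) = 0 := by
    have hsub : Ioi (1 : ℝ) ⊆ ⋃ n : ℕ, Ioc (1 : ℝ) (1 + (n+1)) := by
      intro z hz
      simp only [mem_Ioi] at hz
      obtain ⟨n, hn⟩ := exists_nat_gt (z - 1)
      simp only [mem_iUnion, mem_Ioc]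
      exact ⟨n, hz, by push_cast; linarith⟩
    apply measure_mono_null hsub
    apply measure_iUnion_null
    intro n
    rw [hμrIoc]
    rw [hFconst _ (by have := Nat.cast_nonneg (α := ℝ) n; linarith), hFconst _ le_rfl]
    simp
  have hcompl : (Ioc (1/2 : ℝ) 1)ᶜ = Iic (1/2) ∪ Ioi 1 := by
    ext z
    simp only [mem_compl_iff, mem_Ioc, not_and, not_le, mem_union, mem_Iic, mem_Ioi]
    constructor
    · intro h
      rcases le_or_gt z (1/2) with h2 | h2
      · exact Or.inl h2
      · exact Or.inr (h h2)
    · rintro (h | h) h2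
      · linarith
      · exact h
  refine ⟨μs, μr, ?_, ?_, ?_⟩
  · -- μp = μs + μr
    refine Measure.ext_of_Ioc μp (μs + μr) ?_
    intro a b hab
    rw [Measure.add_apply, hμrIoc]
    have hd := hdiff a b hab.le
    have hofr : ENNReal.ofReal (F b - F a) = μp (Ioc a b) - μs (Ioc a b) := by
      rw [hd, ENNReal.ofReal_sub _ ENNReal.toReal_nonneg,
        ENNReal.ofReal_toReal (measure_ne_top _ _), ENNReal.ofReal_toReal (measure_ne_top _ _)]
    rw [hofr, add_comm, tsub_add_cancel_of_le (hK a b)]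
  · -- symmetry of μs
    intro a b _ _ _
    have hsplit : ∀ S : Set ℝ, MeasurableSet S →
        μp (S ∩ Icc 0 (1/2)) = μp (S ∩ Ico 0 (1/2)) + μp (S ∩ {(1/2 : ℝ)}) := by
      intro S hS
      have hu : S ∩ Icc 0 (1/2) = (S ∩ Ico 0 (1/2)) ∪ (S ∩ {(1/2 : ℝ)}) := by
        ext z
        simp only [mem_inter_iff, mem_Icc, mem_Ico, mem_union, mem_singleton_iff]
        constructor
        · rintro ⟨hzS, h0, h2⟩
          rcases lt_or_eq_of_le h2 with h | h
          · exact Or.inl ⟨hzS, h0, h⟩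
          · exact Or.inr ⟨hzS, h⟩
        · rintro (⟨hzS, h0, h2⟩ | ⟨hzS, h⟩)
          · exact ⟨hzS, h0, h2.le⟩
          · refine ⟨hzS, ?_, ?_⟩ <;> rw [h] <;> norm_num
      rw [hu, measure_union ?_ (hS.inter (measurableSet_singleton _))]
      rw [Set.disjoint_left]
      rintro z ⟨-, -, h2⟩ ⟨-, h3⟩
      rw [mem_singleton_iff] at h3
      linarith
    rw [hμs _ measurableSet_Ioc, hμs _ measurableSet_Ico, hpreIoc, hpreIco]
    simp only [sub_sub_cancel]
    rw [hsplit _ measurableSet_Ioc, hsplit _ measurableSet_Ico]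
    have hsing : Ioc a b ∩ {(1/2:ℝ)} = Ico (1-b) (1-a) ∩ {(1/2:ℝ)} := by
      ext z
      simp only [mem_inter_iff, mem_Ioc, mem_Ico, mem_singleton_iff]
      constructor
      · rintro ⟨⟨h1, h2⟩, rfl⟩
        exact ⟨⟨by linarith, by linarith⟩, rfl⟩
      · rintro ⟨⟨h1, h2⟩, rfl⟩
        exact ⟨⟨by linarith, by linarith⟩, rfl⟩
    rw [hsing]
    ring
  · rw [hcompl]
    exact measure_union_null hr1 hr2
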